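/- On ℓ^p (1 ≤ p < ∞), there exists a weighted backward shift B_w that is strongly topologically transitive but not mixing. Specifically, with the block weight construction one has sup_n M_1^n = ∞ fails to become a limit (M_1^{s_{2k+1}} = 1 for all k, so B_w is not mixing), while B_w is surjective and for every nonzero x ∈ ℓ^p there is a sequence (n_k) with S^{n_k} x → 0, so B_w is strongly topologically transitive. -/

import Mathlib

namespace Stmt18

/-- base-3 digit sum -/
def s3 : ℕ → ℕ
  | 0 => 0
  | n + 1 => s3 ((n + 1) / 3) + (n + 1) % 3
  decreasing_by exact Nat.div_lt_self (Nat.succ_pos n) (by norm_num)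

lemma s3_def (n : ℕ) (h : n ≠ 0) : s3 n = s3 (n / 3) + n % 3 := by
  obtain ⟨m, rfl⟩ := Nat.exists_eq_succ_of_ne_zero h
  rw [s3]

lemma s3_digit (m r : ℕ) (hr : r < 3) : s3 (3 * m + r) = s3 m + r := by
  rcases Nat.eq_zero_or_pos (3 * m + r) with h | h
  · have hm : m = 0 := by omega
    have hr0 : r = 0 := by omega
    subst hm hr0; simp [s3]
  · rw [s3_def _ (by omega), Nat.mul_add_div (by norm_num), Nat.mul_add_mod,
      Nat.div_eq_of_lt hr, Nat.mod_eq_of_lt hr, Nat.add_zero]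

lemma s3_succ_le (n : ℕ) : s3 (n + 1) ≤ s3 n + 1 := by
  induction n using Nat.strong_induction_on with
  | _ n ih =>
    have h3 : 0 < 3 := by norm_num
    have hd := Nat.div_add_mod n 3
    set m := n / 3 with hm
    set r := n % 3 with hrdef
    have hr : r < 3 := Nat.mod_lt _ h3
    rcases Nat.lt_or_ge r 2 with h2 | h2
    · have e1 : n = 3 * m + r := hd.symm
      have e2 : n + 1 = 3 * m + (r + 1) := by omega
      rw [e2, s3_digit m (r + 1) (by omega), e1, s3_digit m r hr]
      omega
    · have hr2 : r = 2 := by omega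
      have e1 : n = 3 * m + 2 := by omega
      have e2 : n + 1 = 3 * (m + 1) + 0 := by omega
      have ihm : s3 (m + 1) ≤ s3 m + 1 := by
        apply ih; omega
      rw [e2, s3_digit (m + 1) 0 (by norm_num), e1, s3_digit m 2 (by norm_num)]
      omega

lemma s3_add_le (a b : ℕ) : s3 (a + b) ≤ s3 a + b := by
  induction b with
  | zero => simp
  | succ b ih =>
    calc s3 (a + (b + 1)) = s3 ((a + b) + 1) := by ring_nf
    _ ≤ s3 (a + b) + 1 := s3_succ_le _
    _ ≤ s3 a + b + 1 := by omega

lemma s3_add_pow (e : ℕ) : ∀ a, s3 (a + 3 ^ e) ≤ s3 a + 1 := by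
  induction e with
  | zero => intro a; simpa using s3_succ_le a
  | succ e ih =>
    intro a
    have hd := Nat.div_add_mod a 3
    set m := a / 3
    set r := a % 3
    have hr : r < 3 := Nat.mod_lt _ (by norm_num)
    have e1 : a = 3 * m + r := hd.symm
    have e2 : a + 3 ^ (e + 1) = 3 * (m + 3 ^ e) + r := by rw [pow_succ]; omega
    rw [e2, s3_digit _ _ hr, e1, s3_digit _ _ hr]
    have := ih m
    omega

lemma s3_div3_le (n : ℕ) : s3 (n / 3) ≤ s3 n := by
  rcases Nat.eq_zero_or_pos n with h | h
  · simp [h]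
  · rw [s3_def n (by omega)]; omega

lemma s3_div_pow_le (t n : ℕ) : s3 (n / 3 ^ t) ≤ s3 n := by
  induction t with
  | zero => simp
  | succ t ih =>
    have : n / 3 ^ (t + 1) = (n / 3 ^ t) / 3 := by
      rw [Nat.div_div_eq_div_mul, pow_succ]
    rw [this]
    exact le_trans (s3_div3_le _) ih

/-- T m = ∑_{i<m} 3^i -/
def T (m : ℕ) : ℕ := ∑ i ∈ Finset.range m, 3 ^ i

lemma T_succ (m : ℕ) : T (m + 1) = T m + 3 ^ m := Finset.sum_range_succ _ _

lemma T_succ' (m : ℕ) : T (m + 1) = 3 * T m + 1 := by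
  unfold T
  rw [Finset.sum_range_succ']
  simp [pow_succ, Finset.mul_sum, mul_comm]

lemma T_id (m : ℕ) : 2 * T m + 1 = 3 ^ m := by
  induction m with
  | zero => simp [T]
  | succ m ih => rw [T_succ']; rw [pow_succ]; omega

lemma T_mono : Monotone T := by
  apply monotone_nat_of_le_succ
  intro n; rw [T_succ]; have : 0 < 3 ^ n := (by positivity); omega

lemma T_ge_self (m : ℕ) : m ≤ T m := by
  induction m with
  | zero => simp [T]
  | succ m ih => rw [T_succ]; have : 0 < 3 ^ m := (by positivity); omega

lemma pow_le_T {k m : ℕ} (h : k < m) : 3 ^ k ≤ T m := by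
  calc 3 ^ k ≤ T (k + 1) := by rw [T_succ]; omega
  _ ≤ T m := T_mono h

lemma T_split (a b : ℕ) : T (a + b) = T b + 3 ^ b * T a := by
  induction a with
  | zero => simp [T]
  | succ a ih =>
    have : a + 1 + b = (a + b) + 1 := by omega
    rw [this, T_succ, ih, T_succ, pow_add]
    ring

lemma s3_T (m : ℕ) : s3 (T m) = m := by
  induction m with
  | zero => simp [T, s3]
  | succ m ih => rw [T_succ', s3_digit _ _ (by norm_num), ih]

lemma A_rep {k m : ℕ} (hk : 1 ≤ k) (hkm : k < m) :
    T m - 3 ^ k = 3 * (T (m - 1) - 3 ^ (k - 1)) + 1 := by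
  obtain ⟨m', rfl⟩ : ∃ m', m = m' + 1 := ⟨m - 1, by omega⟩
  obtain ⟨k', rfl⟩ : ∃ k', k = k' + 1 := ⟨k - 1, by omega⟩
  have h1 : 3 ^ k' ≤ T m' := pow_le_T (by omega)
  rw [T_succ']
  simp only [Nat.add_sub_cancel]
  rw [pow_succ]
  omega

lemma s3_A {k m : ℕ} (hkm : k < m) : s3 (T m - 3 ^ k) + 1 = m := by
  induction k generalizing m with
  | zero =>
    obtain ⟨m', rfl⟩ : ∃ m', m = m' + 1 := ⟨m - 1, by omega⟩
    have : T (m' + 1) - 3 ^ 0 = 3 * T m' + 0 := by rw [T_succ']; omega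
    rw [this, s3_digit _ _ (by norm_num), s3_T]
  | succ k ih =>
    have h1 : T m - 3 ^ (k + 1) = 3 * (T (m - 1) - 3 ^ k) + 1 := by
      have := A_rep (k := k + 1) (m := m) (by omega) hkm
      simpa using this
    rw [h1, s3_digit _ _ (by norm_num)]
    have := ih (m := m - 1) (by omega)
    omega


/-- value of a list of exponents -/
def lval (l : List ℕ) : ℕ := (l.map fun e => 3 ^ e).sum

@[simp] lemma lval_nil : lval [] = 0 := rfl

@[simp] lemma lval_cons (e : ℕ) (l : List ℕ) : lval (e :: l) = 3 ^ e + lval l := by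
  simp [lval]

lemma s3_lval (l : List ℕ) : s3 (lval l) ≤ l.length := by
  induction l with
  | nil => simp [lval, s3]
  | cons e l ih =>
    rw [lval_cons]
    calc s3 (3 ^ e + lval l) = s3 (lval l + 3 ^ e) := by rw [Nat.add_comm]
    _ ≤ s3 (lval l) + 1 := s3_add_pow e _
    _ ≤ l.length + 1 := by omega
    _ = (e :: l).length := by simp

/-- the defining set for the potential P -/
def Dset (y : ℕ) : Set ℕ :=
  {n | ∃ (m : ℕ) (l : List ℕ), n = l.length + ((y : ℤ) + (lval l : ℤ) - (T m : ℤ)).natAbs}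

lemma Dset_nonempty (y : ℕ) : (Dset y).Nonempty :=
  ⟨y, 0, [], by simp [T]⟩

/-- the potential function -/
noncomputable def P (y : ℕ) : ℕ := sInf (Dset y)

lemma P_mem (y : ℕ) : P y ∈ Dset y := Nat.sInf_mem (Dset_nonempty y)

lemma P_le (y m : ℕ) (l : List ℕ) :
    P y ≤ l.length + ((y : ℤ) + (lval l : ℤ) - (T m : ℤ)).natAbs :=
  Nat.sInf_le ⟨m, l, rfl⟩

@[simp] lemma P_T (m : ℕ) : P (T m) = 0 := by
  have := P_le (T m) m []
  simpa using this

@[simp] lemma P_zero : P 0 = 0 := by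
  have := P_T 0
  simpa [T] using this

lemma P_lip (y z : ℕ) : P y ≤ P z + ((y : ℤ) - (z : ℤ)).natAbs := by
  obtain ⟨m, l, hl⟩ := P_mem z
  calc P y ≤ l.length + ((y : ℤ) + (lval l : ℤ) - (T m : ℤ)).natAbs := P_le y m l
  _ ≤ l.length + (((z : ℤ) + (lval l : ℤ) - (T m : ℤ)).natAbs + ((y : ℤ) - (z : ℤ)).natAbs) := by
      gcongr
      have h : (y : ℤ) + (lval l : ℤ) - (T m : ℤ) =
          ((z : ℤ) + (lval l : ℤ) - (T m : ℤ)) + ((y : ℤ) - (z : ℤ)) := by ring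
      rw [h]
      exact Int.natAbs_add_le _ _
  _ = P z + ((y : ℤ) - (z : ℤ)).natAbs := by omega

lemma P_succ_le (y : ℕ) : P (y + 1) ≤ P y + 1 := by
  have := P_lip (y + 1) y
  simpa using this

lemma P_le_succ (y : ℕ) : P y ≤ P (y + 1) + 1 := by
  have := P_lip y (y + 1)
  have h : ((y : ℤ) - ((y : ℕ) + 1 : ℕ)).natAbs = 1 := by push_cast; simp
  omega

lemma P_shift (y k : ℕ) : P y ≤ P (y + 3 ^ k) + 1 := by
  obtain ⟨m, l, hl⟩ := P_mem (y + 3 ^ k)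
  calc P y ≤ (k :: l).length + ((y : ℤ) + (lval (k :: l) : ℤ) - (T m : ℤ)).natAbs := P_le y m _
  _ = P (y + 3 ^ k) + 1 := by
      rw [hl]
      simp only [lval_cons, List.length_cons]
      have h : (y : ℤ) + ((3 ^ k + lval l : ℕ) : ℤ) - (T m : ℤ) =
          (((y + 3 ^ k : ℕ) : ℤ) + (lval l : ℤ) - (T m : ℤ)) := by push_cast; ring
      rw [h]
      omega

lemma P_big (j L : ℕ) : ∃ K, ∀ k, K ≤ k → L ≤ P (j + 3 ^ k) := by
  refine ⟨2 * L + j + 2, fun k hk => ?_⟩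
  apply le_csInf (Dset_nonempty _)
  rintro n ⟨m, l, rfl⟩
  by_cases hlen : L ≤ l.length
  · omega
  push_neg at hlen
  by_cases habs : L ≤ ((((j + 3 ^ k : ℕ)) : ℤ) + (lval l : ℤ) - (T m : ℤ)).natAbs
  · omega
  push_neg at habs
  exfalso
  set V := lval l with hV
  have hsV : s3 V ≤ l.length := s3_lval l
  by_cases hm : m ≤ k
  · -- T m is small, so the integer inside natAbs is large positive
    have h1 : T m ≤ T k := T_mono hm
    have h2 : 2 * T k + 1 = 3 ^ k := T_id k
    have h3 : k ≤ T k := T_ge_self k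
    have hlarge : (L : ℤ) ≤ (((j + 3 ^ k : ℕ) : ℤ) + (V : ℤ) - (T m : ℤ)) := by
      push_cast
      have c1 : (T m : ℤ) ≤ T k := by exact_mod_cast h1
      have c2 : 2 * (T k : ℤ) + 1 = 3 ^ k := by exact_mod_cast h2
      have c3 : (k : ℤ) ≤ T k := by exact_mod_cast h3
      have c4 : (L : ℤ) ≤ k := by exact_mod_cast (by omega : L ≤ k)
      omega
    omega
  push_neg at hm
  -- k < m
  obtain ⟨A, hA⟩ : ∃ A, 3 ^ k + A = T m := Nat.le.dest (pow_le_T hm)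
  have hr : (((j + 3 ^ k : ℕ) : ℤ) + (V : ℤ) - (T m : ℤ)) = (j : ℤ) + V - A := by
    have : (T m : ℤ) = 3 ^ k + A := by exact_mod_cast hA.symm
    rw [this]; push_cast; ring
  rw [hr] at habs
  have hsA : s3 A + 1 = m := by
    have := s3_A hm
    have hAeq : T m - 3 ^ k = A := by omega
    rwa [hAeq] at this
  by_cases hVA : V ≤ A
  · -- deficit case
    obtain ⟨d, hd⟩ : ∃ d, V + d = A := Nat.le.dest hVA
    have hdlt : d < j + L := by
      have h1 : ((j : ℤ) + V - A).natAbs < L := habs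
      have h2 : (A : ℤ) = V + d := by exact_mod_cast hd.symm
      omega
    have : s3 A ≤ s3 V + d := hd ▸ s3_add_le V d
    omega
  push_neg at hVA
  -- surplus case
  obtain ⟨c, hcd⟩ : ∃ c, A + c = V := Nat.le.dest hVA.le
  have hclt : c < L := by
    have h1 : ((j : ℤ) + V - A).natAbs < L := habs
    have h2 : (V : ℤ) = A + c := by exact_mod_cast hcd.symm
    omega
  have htk : L < k := by omega
  have hLL : L < 3 ^ L := Nat.lt_pow_self (by norm_num)
  have hTt : 2 * T L + 1 = 3 ^ L := T_id L
  obtain ⟨X, hX⟩ : ∃ X, 3 ^ (k - L) + X = T (m - L) := Nat.le.dest (pow_le_T (by omega))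
  have hsplit : T m = T L + 3 ^ L * T (m - L) := by
    have h := T_split (m - L) L
    have : m - L + L = m := by omega
    rw [this] at h
    exact h
  have hApow : (3 : ℕ) ^ k = 3 ^ L * 3 ^ (k - L) := by
    rw [← pow_add]
    congr 1
    omega
  have hAX : A = 3 ^ L * X + T L := by
    have h1 : 3 ^ L * T (m - L) = 3 ^ k + 3 ^ L * X := by
      rw [← hX, Nat.mul_add, hApow]
    omega
  have hVX : V = 3 ^ L * X + (T L + c) := by omega
  have hTtc : T L + c < 2 * 3 ^ L := by omega
  have hdiv : V / 3 ^ L = X + (T L + c) / 3 ^ L := by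
    rw [hVX, Nat.mul_add_div (by positivity : 0 < 3 ^ L)]
  have heps : (T L + c) / 3 ^ L ≤ 1 := by
    have h2 : (T L + c) / 3 ^ L < 2 := Nat.div_lt_of_lt_mul (by omega)
    omega
  have hXeq : X = T (m - L) - 3 ^ (k - L) := by omega
  have hsX : s3 X + 1 = m - L := by
    have := s3_A (k := k - L) (m := m - L) (by omega)
    rwa [← hXeq] at this
  -- s3 (X + ε) ≥ s3 X
  have hXrep : X = 3 * (T (m - L - 1) - 3 ^ (k - L - 1)) + 1 := by
    rw [hXeq]
    exact A_rep (by omega) (by omega)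
  set Y := T (m - L - 1) - 3 ^ (k - L - 1) with hY
  have hsXY : s3 X = s3 Y + 1 := by rw [hXrep, s3_digit _ _ (by norm_num)]
  have hmono : s3 X ≤ s3 (X + (T L + c) / 3 ^ L) := by
    rcases Nat.le_one_iff_eq_zero_or_eq_one.mp heps with h | h
    · simp [h]
    · rw [h]
      have : X + 1 = 3 * Y + 2 := by omega
      rw [this, s3_digit _ _ (by norm_num), hsXY]
      omega
  have hchain : s3 (V / 3 ^ L) ≤ l.length := le_trans (s3_div_pow_le L V) hsV
  rw [hdiv] at hchain
  omega

noncomputable def G (n : ℕ) : ℝ := 2 ^ (P n)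

lemma G_pos (n : ℕ) : 0 < G n := by unfold G; positivity

lemma G_ne (n : ℕ) : G n ≠ 0 := (G_pos n).ne'

lemma one_le_G (n : ℕ) : 1 ≤ G n := one_le_pow₀ (by norm_num)

lemma G_le_double {a b : ℕ} (h : P a ≤ P b + 1) : G a ≤ 2 * G b := by
  unfold G
  calc (2 : ℝ) ^ (P a) ≤ 2 ^ (P b + 1) := by
        apply pow_le_pow_right₀ (by norm_num) h
  _ = 2 * 2 ^ (P b) := by ring

lemma G_shift (j k : ℕ) : G j ≤ 2 * G (j + 3 ^ k) := G_le_double (P_shift j k)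

lemma G_big (j : ℕ) (M : ℝ) : ∃ K, ∀ k, K ≤ k → M ≤ G (j + 3 ^ k) := by
  obtain ⟨L, hL⟩ := exists_nat_ge M
  obtain ⟨K, hK⟩ := P_big j L
  refine ⟨K, fun k hk => ?_⟩
  have h1 : L ≤ P (j + 3 ^ k) := hK k hk
  have h2 : (L : ℝ) ≤ 2 ^ L := by
    have hn : L < 2 ^ L := Nat.lt_pow_self (by norm_num)
    calc (L : ℝ) ≤ ((2 ^ L : ℕ) : ℝ) := by exact_mod_cast hn.le
    _ = 2 ^ L := by push_cast; ring
  calc M ≤ (L : ℝ) := hL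
  _ ≤ 2 ^ L := h2
  _ ≤ G (j + 3 ^ k) := by
      unfold G
      apply pow_le_pow_right₀ (by norm_num) h1

noncomputable def w (n : ℕ) : ℝ := G n / G (n - 1)

lemma w_succ (n : ℕ) : w (n + 1) = G (n + 1) / G n := by simp [w]

lemma w_pos (n : ℕ) : 0 < w n := div_pos (G_pos _) (G_pos _)

lemma w_le_two (n : ℕ) : w (n + 1) ≤ 2 := by
  rw [w_succ, div_le_iff₀ (G_pos n)]
  have := G_le_double (P_succ_le n)
  linarith [this]

lemma half_le_w (n : ℕ) : 1 / 2 ≤ w (n + 1) := by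
  rw [w_succ, le_div_iff₀ (G_pos n)]
  have := G_le_double (P_le_succ n)
  linarith

lemma w_prod (j : ℕ) : ∀ n, ∏ t ∈ Finset.range n, w (j + t + 1) = G (j + n) / G j := by
  intro n
  induction n with
  | zero => simp [div_self (G_ne j)]
  | succ n ih =>
    rw [Finset.prod_range_succ, ih, w_succ]
    have h : j + n + 1 = j + (n + 1) := by omega
    rw [h]
    rw [div_mul_div_comm]
    rw [mul_comm (G j) (G (j + n))]
    rw [mul_div_mul_left _ _ (G_ne (j + n))]

lemma G_zero : G 0 = 1 := by unfold G; rw [P_zero]; norm_num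

lemma w_prod0 (n : ℕ) : ∏ t ∈ Finset.range n, w (1 + t) = G n := by
  have h : ∀ t, w (1 + t) = w (0 + t + 1) := by intro t; congr 1; omega
  calc ∏ t ∈ Finset.range n, w (1 + t) = ∏ t ∈ Finset.range n, w (0 + t + 1) := by
        apply Finset.prod_congr rfl; intro t _; rw [h]
  _ = G (0 + n) / G 0 := w_prod 0 n
  _ = G n := by rw [G_zero, Nat.zero_add, div_one]

lemma not_mixing : ¬ Filter.Tendsto (fun n => ∏ t ∈ Finset.range n, w (1 + t))
    Filter.atTop Filter.atTop := by
  intro h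
  have h2 := h.eventually_ge_atTop 2
  obtain ⟨N, hN⟩ := h2.exists_forall_of_atTop
  have hmN : N ≤ T N := T_ge_self N
  have := hN (T N) hmN
  rw [w_prod0, show G (T N) = 1 from by unfold G; rw [P_T N]; norm_num] at this
  linarith

open Filter Topology


section Lp

variable (p : ENNReal) [Fact (1 ≤ p)] (hp : p ≠ ⊤)

set_option linter.unusedSectionVars false
set_option linter.unusedVariables false

lemma hq (hp : p ≠ ⊤) : 0 < p.toReal :=
  ENNReal.toReal_pos (zero_lt_one.trans_le (Fact.out : 1 ≤ p)).ne' hp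

local notation "E" => (fun _ : ℕ => ℂ)

lemma norm_w_mul_le (x : lp E p) (n : ℕ) :
    ‖(w (n + 1) : ℂ) * x (n + 1)‖ ≤ 2 * ‖x (n + 1)‖ := by
  rw [norm_mul]
  apply mul_le_mul_of_nonneg_right _ (norm_nonneg _)
  rw [Complex.norm_real, Real.norm_eq_abs, abs_of_pos (w_pos (n + 1))]
  exact w_le_two n

lemma norm_div_w_le (x : lp E p) (n : ℕ) :
    ‖x n / (w (n + 1) : ℂ)‖ ≤ 2 * ‖x n‖ := by
  rw [norm_div]
  rw [Complex.norm_real, Real.norm_eq_abs, abs_of_pos (w_pos (n + 1))]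
  rw [div_le_iff₀ (w_pos (n + 1))]
  have := half_le_w n
  nlinarith [norm_nonneg (x n)]

lemma rpow_le_of_le {a b : ℝ} (hb : 0 ≤ a) (h : a ≤ 2 * b) (q : ℝ) (hq0 : 0 ≤ q) :
    a ^ q ≤ 2 ^ q * b ^ q := by
  have hb0 : 0 ≤ b := by linarith
  calc a ^ q ≤ (2 * b) ^ q := Real.rpow_le_rpow hb h hq0
  _ = 2 ^ q * b ^ q := Real.mul_rpow (by norm_num) hb0

/-- summability of coordinate norms -/
lemma xsum (hp : p ≠ ⊤) (x : lp E p) : Summable (fun n => ‖x n‖ ^ p.toReal) :=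
  (lp.memℓp x).summable (hq p hp)

include hp in
lemma memB (x : lp E p) : Memℓp (fun n => (w (n + 1) : ℂ) * x (n + 1)) p := by
  apply memℓp_gen
  have hx1 : Summable (fun n => ‖x (n + 1)‖ ^ p.toReal) :=
    (summable_nat_add_iff (f := fun n => ‖x n‖ ^ p.toReal) 1).2 (xsum p hp x)
  exact Summable.of_nonneg_of_le (fun n => by positivity)
    (fun n => rpow_le_of_le (norm_nonneg _) (norm_w_mul_le p x n) _ (hq p hp).le)
    (hx1.mul_left _)

/-- the underlying function of the forward weighted shift -/
noncomputable def Sfun (x : lp E p) : ∀ _ : ℕ, ℂ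
  | 0 => 0
  | (n + 1) => x n / (w (n + 1) : ℂ)

@[simp] lemma Sfun_zero (x : lp E p) : Sfun p x 0 = 0 := rfl

@[simp] lemma Sfun_succ (x : lp E p) (n : ℕ) : Sfun p x (n + 1) = x n / (w (n + 1) : ℂ) := rfl

include hp in
lemma memS (x : lp E p) : Memℓp (Sfun p x) p := by
  apply memℓp_gen
  apply (summable_nat_add_iff (f := fun n => ‖Sfun p x n‖ ^ p.toReal) 1).1
  exact Summable.of_nonneg_of_le (fun n => by positivity)
    (fun n => rpow_le_of_le (norm_nonneg _) (norm_div_w_le p x n) _ (hq p hp).le)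
    ((xsum p hp x).mul_left _)

include hp in
noncomputable def BL : lp E p →ₗ[ℂ] lp E p where
  toFun x := ⟨fun n => (w (n + 1) : ℂ) * x (n + 1), memB p hp x⟩
  map_add' x y := by
    apply lp.ext
    funext n
    simp only [lp.coeFn_add, Pi.add_apply]
    ring
  map_smul' c x := by
    apply lp.ext
    funext n
    simp only [lp.coeFn_smul, Pi.smul_apply, RingHom.id_apply, smul_eq_mul]
    ring

include hp in
noncomputable def SL : lp E p →ₗ[ℂ] lp E p where
  toFun x := ⟨Sfun p x, memS p hp x⟩
  map_add' x y := by
    apply lp.ext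
    funext n
    cases n with
    | zero => exact (add_zero (0:ℂ)).symm
    | succ m =>
      simp only [Sfun_succ, lp.coeFn_add, Pi.add_apply]
      ring
  map_smul' c x := by
    apply lp.ext
    funext n
    cases n with
    | zero => simp
    | succ m =>
      simp only [Sfun_succ, lp.coeFn_smul, Pi.smul_apply, RingHom.id_apply, smul_eq_mul]
      ring

lemma BL_apply (x : lp E p) (n : ℕ) : (BL p hp x) n = (w (n + 1) : ℂ) * x (n + 1) := rfl

lemma SL_apply_zero (x : lp E p) : (SL p hp x) 0 = 0 := rfl

lemma SL_apply_succ (x : lp E p) (n : ℕ) : (SL p hp x) (n + 1) = x n / (w (n + 1) : ℂ) := rfl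

include hp in
lemma tsum_shift_le (x : lp E p) :
    ∑' n, ‖x (n + 1)‖ ^ p.toReal ≤ ∑' n, ‖x n‖ ^ p.toReal := by
  have hx1 : Summable (fun n => ‖x (n + 1)‖ ^ p.toReal) :=
    (summable_nat_add_iff (f := fun n => ‖x n‖ ^ p.toReal) 1).2 (xsum p hp x)
  exact Summable.tsum_le_tsum_of_inj (fun n => n + 1) (add_left_injective 1)
    (fun c _ => by positivity) (fun n => le_rfl) hx1 (xsum p hp x)

include hp in
lemma BL_norm (x : lp E p) : ‖BL p hp x‖ ≤ 2 * ‖x‖ := by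
  apply lp.norm_le_of_tsum_le (hq p hp) (by positivity)
  have hsum : ∀ n, ‖(BL p hp x) n‖ ^ p.toReal ≤ 2 ^ p.toReal * ‖x (n + 1)‖ ^ p.toReal :=
    fun n => rpow_le_of_le (norm_nonneg _) (norm_w_mul_le p x n) _ (hq p hp).le
  have hx1 : Summable (fun n => ‖x (n + 1)‖ ^ p.toReal) :=
    (summable_nat_add_iff (f := fun n => ‖x n‖ ^ p.toReal) 1).2 (xsum p hp x)
  calc ∑' n, ‖(BL p hp x) n‖ ^ p.toReal
      ≤ ∑' n, 2 ^ p.toReal * ‖x (n + 1)‖ ^ p.toReal :=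
        Summable.tsum_le_tsum hsum (xsum p hp _) (hx1.mul_left _)
  _ = 2 ^ p.toReal * ∑' n, ‖x (n + 1)‖ ^ p.toReal := tsum_mul_left
  _ ≤ 2 ^ p.toReal * ∑' n, ‖x n‖ ^ p.toReal :=
        mul_le_mul_of_nonneg_left (tsum_shift_le p hp x) (by positivity)
  _ = 2 ^ p.toReal * ‖x‖ ^ p.toReal := by rw [lp.norm_rpow_eq_tsum (hq p hp)]
  _ = (2 * ‖x‖) ^ p.toReal := (Real.mul_rpow (by norm_num) (norm_nonneg _)).symm

include hp in
lemma SL_norm (x : lp E p) : ‖SL p hp x‖ ≤ 2 * ‖x‖ := by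
  apply lp.norm_le_of_tsum_le (hq p hp) (by positivity)
  have hS : Summable (fun n => ‖(SL p hp x) n‖ ^ p.toReal) := xsum p hp _
  have hsum : ∀ n, ‖(SL p hp x) (n + 1)‖ ^ p.toReal ≤ 2 ^ p.toReal * ‖x n‖ ^ p.toReal :=
    fun n => rpow_le_of_le (norm_nonneg _) (norm_div_w_le p x n) _ (hq p hp).le
  calc ∑' n, ‖(SL p hp x) n‖ ^ p.toReal
      = ‖(SL p hp x) 0‖ ^ p.toReal + ∑' n, ‖(SL p hp x) (n + 1)‖ ^ p.toReal :=
        Summable.tsum_eq_zero_add hS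
  _ = ∑' n, ‖(SL p hp x) (n + 1)‖ ^ p.toReal := by
        rw [SL_apply_zero, norm_zero, Real.zero_rpow (hq p hp).ne', zero_add]
  _ ≤ ∑' n, 2 ^ p.toReal * ‖x n‖ ^ p.toReal :=
        Summable.tsum_le_tsum hsum
          ((summable_nat_add_iff (f := fun n => ‖(SL p hp x) n‖ ^ p.toReal) 1).2 hS)
          ((xsum p hp x).mul_left _)
  _ = 2 ^ p.toReal * ‖x‖ ^ p.toReal := by rw [tsum_mul_left, lp.norm_rpow_eq_tsum (hq p hp)]
  _ = (2 * ‖x‖) ^ p.toReal := (Real.mul_rpow (by norm_num) (norm_nonneg _)).symm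

noncomputable def Bop : lp E p →L[ℂ] lp E p :=
  (BL p hp).mkContinuous 2 (BL_norm p hp)

noncomputable def Sop : lp E p →L[ℂ] lp E p :=
  (SL p hp).mkContinuous 2 (SL_norm p hp)

lemma Bop_apply (x : lp E p) (n : ℕ) : (Bop p hp x) n = (w (n + 1) : ℂ) * x (n + 1) := rfl

lemma Sop_apply_zero (x : lp E p) : (Sop p hp x) 0 = 0 := rfl

lemma Sop_apply_succ (x : lp E p) (n : ℕ) : (Sop p hp x) (n + 1) = x n / (w (n + 1) : ℂ) := rfl


lemma Bop_iter (n : ℕ) (x : lp E p) (j : ℕ) :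
    ((⇑(Bop p hp))^[n] x) j = (((G (j + n) / G j : ℝ)) : ℂ) * x (j + n) := by
  induction n generalizing x j with
  | zero => simp [div_self (G_ne j)]
  | succ n ih =>
    rw [Function.iterate_succ_apply']
    rw [Bop_apply, ih]
    have h1 : j + 1 + n = j + (n + 1) := by omega
    rw [h1, w_succ]
    rw [← mul_assoc, ← Complex.ofReal_mul]
    congr 2
    have h2 := G_ne j
    have h3 := G_ne (j + 1)
    field_simp

lemma Sop_iter_zero (n : ℕ) (x : lp E p) : ∀ j, j < n → ((⇑(Sop p hp))^[n] x) j = 0 := by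
  induction n with
  | zero => intro j h; omega
  | succ n ih =>
    intro j hj
    rw [Function.iterate_succ_apply']
    cases j with
    | zero => exact Sop_apply_zero p hp _
    | succ i =>
      rw [Sop_apply_succ, ih i (by omega), zero_div]

lemma Sop_iter (n : ℕ) (x : lp E p) (j : ℕ) :
    ((⇑(Sop p hp))^[n] x) (j + n) = (((G j / G (j + n) : ℝ)) : ℂ) * x j := by
  induction n generalizing x j with
  | zero => simp [div_self (G_ne j)]
  | succ n ih =>
    rw [Function.iterate_succ_apply']
    have h1 : j + (n + 1) = (j + n) + 1 := by omega
    rw [h1, Sop_apply_succ, ih, w_succ]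
    have h2 : j + n + 1 = j + (n + 1) := by omega
    rw [h2]
    rw [mul_div_right_comm, ← Complex.ofReal_div]
    congr 2
    have h3 := G_ne (j + n)
    have h4 := G_ne (j + (n + 1))
    field_simp


lemma ratio_nonneg (a b : ℕ) : 0 ≤ G a / G b := (div_pos (G_pos a) (G_pos b)).le

lemma Snorm_coord (n : ℕ) (x : lp E p) (j : ℕ) :
    ‖((⇑(Sop p hp))^[n] x) (j + n)‖ ^ p.toReal
      = (G j / G (j + n)) ^ p.toReal * ‖x j‖ ^ p.toReal := by
  rw [Sop_iter, norm_mul, Complex.norm_real, Real.norm_eq_abs, abs_of_nonneg (ratio_nonneg j _),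
    Real.mul_rpow (ratio_nonneg j _) (norm_nonneg _)]

lemma Snorm_rpow (n : ℕ) (x : lp E p) :
    ‖(⇑(Sop p hp))^[n] x‖ ^ p.toReal
      = ∑' j, (G j / G (j + n)) ^ p.toReal * ‖x j‖ ^ p.toReal := by
  rw [lp.norm_rpow_eq_tsum (hq p hp)]
  rw [← Function.Injective.tsum_eq (g := fun j : ℕ => j + n)
      (add_left_injective n) (f := fun i => ‖((⇑(Sop p hp))^[n] x) i‖ ^ p.toReal) ?_]
  · exact tsum_congr fun j => Snorm_coord p hp n x j
  · intro i hi
    by_cases hin : i < n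
    · exfalso
      apply hi
      simp only [Function.mem_support, ne_eq, not_not] at *
      rw [Sop_iter_zero p hp n x i hin, norm_zero, Real.zero_rpow (hq p hp).ne']
    · exact ⟨i - n, by show i - n + n = i; omega⟩

lemma pow3_mono : StrictMono (fun k : ℕ => 3 ^ k) := by
  apply strictMono_nat_of_lt_succ
  intro n
  have h : 0 < 3 ^ n := by positivity
  calc 3 ^ n < 3 ^ n * 3 := by omega
  _ = 3 ^ (n + 1) := by rw [pow_succ]

lemma S_tendsto (x : lp E p) :
    Tendsto (fun k => (⇑(Sop p hp))^[3 ^ k] x) atTop (𝓝 0) := by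
  rw [tendsto_zero_iff_norm_tendsto_zero]
  have hq0 := hq p hp
  have key : Tendsto (fun k => ‖(⇑(Sop p hp))^[3 ^ k] x‖ ^ p.toReal) atTop (𝓝 0) := by
    have h0 : (0 : ℝ) = ∑' j : ℕ, (0 : ℝ) := by rw [tsum_zero]
    rw [h0]
    have heq : ∀ k, ‖(⇑(Sop p hp))^[3 ^ k] x‖ ^ p.toReal
        = ∑' j, (G j / G (j + 3 ^ k)) ^ p.toReal * ‖x j‖ ^ p.toReal :=
      fun k => Snorm_rpow p hp (3 ^ k) x
    simp only [heq]
    apply tendsto_tsum_of_dominated_convergence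
      (bound := fun j => 2 ^ p.toReal * ‖x j‖ ^ p.toReal)
    · exact (xsum p hp x).mul_left _
    · intro j
      have hratio : Tendsto (fun k => G j / G (j + 3 ^ k)) atTop (𝓝 0) := by
        rw [Metric.tendsto_atTop]
        intro ε hε
        obtain ⟨K, hK⟩ := G_big j (G j / ε + 1)
        refine ⟨K, fun k hk => ?_⟩
        have h1 := hK k hk
        have h2 : 0 < G j / ε := div_pos (G_pos j) hε
        have h3 : G j / G (j + 3 ^ k) < ε := by
          rw [div_lt_iff₀ (G_pos _)]
          have h4 : G j / ε < G (j + 3 ^ k) := by linarith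
          rw [div_lt_iff₀ hε] at h4
          linarith
        rw [Real.dist_eq, sub_zero, abs_of_nonneg (ratio_nonneg j _)]
        exact h3
      have h5 : Tendsto (fun k => (G j / G (j + 3 ^ k)) ^ p.toReal) atTop (𝓝 0) := by
        have := hratio.rpow_const (p := p.toReal) (Or.inr hq0.le)
        rwa [Real.zero_rpow hq0.ne'] at this
      have h6 := h5.mul_const (‖x j‖ ^ p.toReal)
      rwa [zero_mul] at h6
    · apply Eventually.of_forall
      intro k j
      have hb : G j / G (j + 3 ^ k) ≤ 2 := by
        rw [div_le_iff₀ (G_pos _)]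
        have := G_shift j k
        linarith
      have hb2 : (G j / G (j + 3 ^ k)) ^ p.toReal ≤ 2 ^ p.toReal :=
        Real.rpow_le_rpow (ratio_nonneg j _) hb hq0.le
      rw [Real.norm_eq_abs, abs_of_nonneg (mul_nonneg (Real.rpow_nonneg (ratio_nonneg j _) _)
        (Real.rpow_nonneg (norm_nonneg _) _))]
      exact mul_le_mul_of_nonneg_right hb2 (Real.rpow_nonneg (norm_nonneg _) _)
  have hcomp := key.rpow_const (p := p.toReal⁻¹) (Or.inr (inv_pos.2 hq0).le)
  rw [Real.zero_rpow (inv_pos.2 hq0).ne'] at hcomp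
  convert hcomp using 2 with k
  rw [Real.rpow_rpow_inv (norm_nonneg _) hq0.ne']


/-- truncation to the first N coordinates -/
noncomputable def trunc (N : ℕ) (u : lp E p) : lp E p :=
  ∑ i ∈ Finset.range N, lp.single p i (u i)

lemma trunc_apply (N : ℕ) (u : lp E p) (j : ℕ) :
    trunc p N u j = if j ∈ Finset.range N then u j else 0 := by
  unfold trunc
  simp only [lp.coeFn_sum, Finset.sum_apply, lp.single_apply, Finset.sum_dite_eq, Pi.single_apply, Finset.sum_ite_eq]

lemma trunc_apply_ge (N : ℕ) (u : lp E p) (j : ℕ) (h : N ≤ j) : trunc p N u j = 0 := by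
  rw [trunc_apply]
  rw [if_neg]
  simp only [Finset.mem_range, not_lt]
  exact h

include hp in
lemma trunc_tendsto (u : lp E p) :
    Tendsto (fun N => ‖u - trunc p N u‖) atTop (𝓝 0) := by
  have hq0 := hq p hp
  have h1 : Tendsto (fun N : ℕ => ∑ i ∈ Finset.range N, ‖u i‖ ^ p.toReal) atTop
      (𝓝 (‖u‖ ^ p.toReal)) := (lp.hasSum_norm hq0 u).tendsto_sum_nat
  have h2 : Tendsto (fun N : ℕ => ‖u - trunc p N u‖ ^ p.toReal) atTop (𝓝 0) := by
    have h3 := tendsto_const_nhds (x := ‖u‖ ^ p.toReal) (f := atTop (α := ℕ)) |>.sub h1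
    rw [sub_self] at h3
    convert h3 using 2 with N
    exact lp.norm_compl_sum_single hq0 u (Finset.range N)
  have hcomp := h2.rpow_const (p := p.toReal⁻¹) (Or.inr (inv_pos.2 hq0).le)
  rw [Real.zero_rpow (inv_pos.2 hq0).ne'] at hcomp
  convert hcomp using 2 with N
  rw [Real.rpow_rpow_inv (norm_nonneg _) hq0.ne']

lemma Binv (n : ℕ) (u x : lp E p) :
    (⇑(Bop p hp))^[n] (trunc p n u + (⇑(Sop p hp))^[n] x) = x := by
  apply lp.ext
  funext j
  rw [Bop_iter]
  have hco : (trunc p n u + (⇑(Sop p hp))^[n] x) (j + n)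
      = (((G j / G (j + n) : ℝ)) : ℂ) * x j := by
    rw [lp.coeFn_add, Pi.add_apply, trunc_apply_ge p n u (j + n) (by omega),
      Sop_iter, zero_add]
  rw [hco, ← mul_assoc, ← Complex.ofReal_mul]
  have hone : (G (j + n) / G j) * (G j / G (j + n)) = 1 := by
    have h1 := G_ne j
    have h2 := G_ne (j + n)
    field_simp
  rw [hone, Complex.ofReal_one, one_mul]

include hp in
lemma B_surj : Function.Surjective ⇑(Bop p hp) := by
  intro x
  refine ⟨Sop p hp x, ?_⟩
  apply lp.ext
  funext n
  rw [Bop_apply, Sop_apply_succ, mul_comm, div_mul_cancel₀]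
  exact Complex.ofReal_ne_zero.2 (w_pos (n + 1)).ne'

include hp in
lemma transitive (U : Set (lp E p)) (hU : IsOpen U) (hne : U.Nonempty) :
    {x : lp E p | x ≠ 0} ⊆ ⋃ n : ℕ, (⇑(Bop p hp))^[n] '' U := by
  obtain ⟨u, hu⟩ := hne
  intro x _
  have t1 : Tendsto (fun k => trunc p (3 ^ k) u) atTop (𝓝 u) := by
    rw [tendsto_iff_norm_sub_tendsto_zero]
    have := (trunc_tendsto p hp u).comp (pow3_mono.tendsto_atTop)
    convert this using 2 with k
    rw [norm_sub_rev]
    rfl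
  have t2 := S_tendsto p hp x
  have hyk : Tendsto (fun k => trunc p (3 ^ k) u + (⇑(Sop p hp))^[3 ^ k] x) atTop (𝓝 u) := by
    have := t1.add t2
    rwa [add_zero] at this
  have hev : ∀ᶠ k in atTop, (trunc p (3 ^ k) u + (⇑(Sop p hp))^[3 ^ k] x) ∈ U :=
    hyk.eventually (hU.eventually_mem hu)
  obtain ⟨k, hk⟩ := hev.exists
  apply Set.mem_iUnion.2
  exact ⟨3 ^ k, ⟨_, hk, Binv p hp (3 ^ k) u x⟩⟩

end Lp

end Stmt18


theorem stmt_18 (p : ENNReal) [Fact (1 ≤ p)] (hp : p ≠ ⊤) :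
    ∃ (w : ℕ → ℝ) (B S : lp (fun _ : ℕ => ℂ) p →L[ℂ] lp (fun _ : ℕ => ℂ) p),
      (∀ n, 1 ≤ n → 0 < w n) ∧ (∃ C : ℝ, ∀ n, 1 ≤ n → w n ≤ C) ∧
      (∃ c : ℝ, 0 < c ∧ ∀ n, 1 ≤ n → c ≤ w n) ∧
      (∀ (x : lp (fun _ : ℕ => ℂ) p) (n : ℕ), B x n = (w (n + 1) : ℂ) * x (n + 1)) ∧
      (∀ x : lp (fun _ : ℕ => ℂ) p, S x 0 = 0) ∧
      (∀ (x : lp (fun _ : ℕ => ℂ) p) (n : ℕ), S x (n + 1) = x n / (w (n + 1) : ℂ)) ∧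
      ¬ Filter.Tendsto (fun n => ∏ t ∈ Finset.range n, w (1 + t))
          Filter.atTop Filter.atTop ∧
      Function.Surjective B ∧
      (∀ x : lp (fun _ : ℕ => ℂ) p, x ≠ 0 → ∃ nk : ℕ → ℕ, StrictMono nk ∧
        Filter.Tendsto (fun k => (⇑S)^[nk k] x) Filter.atTop (nhds 0)) ∧
      (∀ U : Set (lp (fun _ : ℕ => ℂ) p), IsOpen U → U.Nonempty →
        {x : lp (fun _ : ℕ => ℂ) p | x ≠ 0} ⊆ ⋃ n : ℕ, (⇑B)^[n] '' U) := by
  refine ⟨Stmt18.w, Stmt18.Bop p hp, Stmt18.Sop p hp, fun n _ => Stmt18.w_pos n, ⟨2, ?_⟩,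
    ⟨1/2, by norm_num, ?_⟩, fun x n => rfl, fun x => rfl, fun x n => rfl,
    Stmt18.not_mixing, Stmt18.B_surj p hp, ?_, Stmt18.transitive p hp⟩
  · intro n hn
    obtain ⟨m, rfl⟩ : ∃ m, n = m + 1 := ⟨n - 1, by omega⟩
    exact Stmt18.w_le_two m
  · intro n hn
    obtain ⟨m, rfl⟩ : ∃ m, n = m + 1 := ⟨n - 1, by omega⟩
    exact Stmt18.half_le_w m
  · intro x _
    exact ⟨fun k => 3 ^ k, Stmt18.pow3_mono, Stmt18.S_tendsto p hp x⟩
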